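/- Let H be a finite-dimensional vector space over a field of characteristic zero, m a non-negative integer, and N : H → H a linear map with N^{m+1} = 0. Then there is a unique increasing filtration 0 ⊆ W_0 ⊆ W_1 ⊆ ... ⊆ W_{2m} = H such that N(W_l) ⊆ W_{l-2} for all l, and for every l ≥ 0 the induced map N^l : W_{m+l}/W_{m+l-1} → W_{m-l}/W_{m-l-1} is an isomorphism. -/
import Mathlib


/-- `W` is the monodromy weight filtration of the nilpotent endomorphism `N`
centered at weight `m`: an increasing filtration `0 ⊆ W₀ ⊆ ⋯ ⊆ W_{2m} = H` with
`N (W l) ⊆ W (l-2)` such that for every `l ≥ 0` the map induced by `N^l` on graded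
pieces `Gr_{m+l} → Gr_{m-l}` is an isomorphism (injectivity and surjectivity of the
induced map are stated elementarily in terms of representatives). -/
def IsMonodromyWeightFiltration {K H : Type*} [Field K] [AddCommGroup H] [Module K H]
    (m : ℕ) (N : H →ₗ[K] H) (W : ℤ → Submodule K H) : Prop :=
  Monotone W ∧
  (∀ l : ℤ, l < 0 → W l = ⊥) ∧
  (∀ l : ℤ, 2 * (m : ℤ) ≤ l → W l = ⊤) ∧
  (∀ l : ℤ, (W l).map N ≤ W (l - 2)) ∧
  (∀ l : ℕ,
    (∀ x ∈ W ((m : ℤ) + l), (N ^ l) x ∈ W ((m : ℤ) - l)) ∧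
    (∀ x ∈ W ((m : ℤ) + l), (N ^ l) x ∈ W ((m : ℤ) - l - 1) → x ∈ W ((m : ℤ) + l - 1)) ∧
    (∀ y ∈ W ((m : ℤ) - l), ∃ x ∈ W ((m : ℤ) + l), y - (N ^ l) x ∈ W ((m : ℤ) - l - 1)))

universe u v

private lemma MWF.iter {K H : Type*} [Field K] [AddCommGroup H] [Module K H]
    {m : ℕ} {N : H →ₗ[K] H} {W : ℤ → Submodule K H}
    (hW : IsMonodromyWeightFiltration m N W) (k : ℕ) :
    ∀ (l : ℤ) {x : H}, x ∈ W l → (N ^ k) x ∈ W (l - 2 * k) := by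
  induction k with
  | zero => intro l x hx; simpa using hx
  | succ k IH =>
    intro l x hx
    have h1 : N x ∈ W (l - 2) := hW.2.2.2.1 l (Submodule.mem_map_of_mem hx)
    have h2 := IH (l - 2) h1
    have e : l - 2 - 2 * (k : ℤ) = l - 2 * ((k : ℕ) + 1 : ℕ) := by push_cast; ring
    rw [e] at h2
    have e2 : (N ^ (k + 1)) x = (N ^ k) (N x) := by
      rw [pow_succ]; rfl
    rwa [e2]

private lemma MWF.ends {K H : Type*} [Field K] [AddCommGroup H] [Module K H]
    {m : ℕ} {N : H →ₗ[K] H} {W : ℤ → Submodule K H}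
    (hW : IsMonodromyWeightFiltration m N W) :
    W (2 * (m : ℤ) - 1) = LinearMap.ker (N ^ m) ∧ W 0 = LinearMap.range (N ^ m) := by
  obtain ⟨hmono, hbot, htop, hmap, h5⟩ := hW
  obtain ⟨ha, hb, hc⟩ := h5 m
  have e1 : (m : ℤ) + m - 1 = 2 * m - 1 := by ring
  have e2 : (m : ℤ) - m = 0 := by ring
  have e3 : (m : ℤ) - m - 1 = -1 := by ring
  have e4 : (m : ℤ) + m = 2 * m := by ring
  constructor
  · apply le_antisymm
    · intro x hx
      have hx' := MWF.iter ⟨hmono, hbot, htop, hmap, h5⟩ m (2 * (m : ℤ) - 1) hx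
      have : (2 * (m : ℤ) - 1 - 2 * m) < 0 := by omega
      rw [hbot _ this] at hx'
      simpa using hx'
    · intro x hx
      have hxt : x ∈ W ((m : ℤ) + m) := by rw [e4, htop _ le_rfl]; trivial
      have := hb x hxt (by rw [e3, hbot _ (by norm_num)]; simp [LinearMap.mem_ker.mp hx])
      rwa [e1] at this
  · apply le_antisymm
    · intro y hy
      rw [← e2] at hy
      obtain ⟨x, _, hd⟩ := hc y hy
      rw [e3, hbot _ (by norm_num)] at hd
      have : y = (N ^ m) x := by
        have h0 := (Submodule.mem_bot K).mp hd
        exact sub_eq_zero.mp h0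
      exact ⟨x, this.symm⟩
    · rintro y ⟨x, rfl⟩
      have hxt : x ∈ W (2 * (m : ℤ)) := by rw [htop _ le_rfl]; trivial
      have := MWF.iter ⟨hmono, hbot, htop, hmap, h5⟩ m (2 * (m : ℤ)) hxt
      simpa using this

set_option maxHeartbeats 1000000 in
private theorem MWF.succ {K : Type v} [Field K] {H : Type u} [AddCommGroup H] [Module K H]
    (m : ℕ) (N : H →ₗ[K] H) (hN : N ^ (m + 1 + 1) = 0)
    (IH : ∀ {H' : Type u} [AddCommGroup H'] [Module K H'] (N' : H' →ₗ[K] H'),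
      N' ^ (m + 1) = 0 → ∃! W : ℤ → Submodule K H', IsMonodromyWeightFiltration m N' W) :
    ∃! W : ℤ → Submodule K H, IsMonodromyWeightFiltration (m + 1) N W := by
  classical
  -- powers of N vanish from m+2 on
  have hpow : ∀ k : ℕ, m + 2 ≤ k → N ^ k = 0 := by
    intro k hk
    rw [← Nat.sub_add_cancel hk, pow_add]
    have : N ^ (m + 2) = 0 := hN
    rw [this, mul_zero]
  set Km : Submodule K H := LinearMap.ker (N ^ (m + 1)) with hKmdef
  set Im : Submodule K H := LinearMap.range (N ^ (m + 1)) with hImdef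
  have hNcomm : ∀ (a b : ℕ) (x : H), (N ^ a) ((N ^ b) x) = (N ^ b) ((N ^ a) x) := by
    intro a b x
    rw [← Module.End.mul_apply, ← Module.End.mul_apply, pow_mul_comm]
  have hNpowker : ∀ (k : ℕ) (x : H), x ∈ Km → (N ^ k) x ∈ Km := by
    intro k x hx
    rw [hKmdef, LinearMap.mem_ker] at hx ⊢
    rw [hNcomm, hx, map_zero]
  have hNKm : ∀ x ∈ Km, N x ∈ Km := by
    intro x hx
    have := hNpowker 1 x hx
    rwa [pow_one] at this
  have hIK : Im ≤ Km := by
    rintro x ⟨y, rfl⟩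
    rw [hKmdef, LinearMap.mem_ker, ← Module.End.mul_apply, ← pow_add]
    rw [hpow (m + 1 + (m + 1)) (by omega)]
    rfl
  have hNIm : ∀ x ∈ Im, N x ∈ Im := by
    rintro x ⟨y, rfl⟩
    refine ⟨N y, ?_⟩
    rw [← Module.End.mul_apply, ← Module.End.mul_apply, ← pow_succ, ← pow_succ']
  set Nr : Km →ₗ[K] Km := N.restrict hNKm with hNrdef
  have hNrcoe : ∀ x : Km, ((Nr x : Km) : H) = N (x : H) := fun x => rfl
  have hNrk : ∀ (k : ℕ) (x : Km), (((Nr ^ k) x : Km) : H) = (N ^ k) (x : H) := by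
    intro k
    induction k with
    | zero => intro x; simp
    | succ k IHk =>
      intro x
      have e1 : (Nr ^ (k + 1)) x = (Nr ^ k) (Nr x) := by rw [pow_succ]; rfl
      have e2 : (N ^ (k + 1)) (x : H) = (N ^ k) (N (x : H)) := by rw [pow_succ]; rfl
      rw [e1, e2, IHk (Nr x), hNrcoe]
  set I' : Submodule K Km := Im.comap Km.subtype with hI'def
  have hmemI' : ∀ x : Km, x ∈ I' ↔ (x : H) ∈ Im := fun x => Iff.rfl
  have hNI' : I' ≤ I'.comap Nr := by
    intro x hx
    rw [Submodule.mem_comap, hmemI', hNrcoe]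
    exact hNIm _ hx
  set N' := Submodule.mapQ I' I' Nr hNI' with hN'def
  have hc1 : ∀ x : Km, N' (I'.mkQ x) = I'.mkQ (Nr x) := fun x => rfl
  have hck : ∀ (k : ℕ) (x : Km), (N' ^ k) (I'.mkQ x) = I'.mkQ ((Nr ^ k) x) := by
    intro k
    induction k with
    | zero => intro x; simp
    | succ k IHk =>
      intro x
      have e1 : (N' ^ (k + 1)) (I'.mkQ x) = (N' ^ k) (N' (I'.mkQ x)) := by rw [pow_succ]; rfl
      have e2 : (Nr ^ (k + 1)) x = (Nr ^ k) (Nr x) := by rw [pow_succ]; rfl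
      rw [e1, hc1, IHk (Nr x), e2]
  have hN' : N' ^ (m + 1) = 0 := by
    apply LinearMap.ext
    intro y
    obtain ⟨x, rfl⟩ := I'.mkQ_surjective y
    rw [hck]
    have h0 : (Nr ^ (m + 1)) x = 0 := by
      apply Subtype.ext
      rw [hNrk]
      exact LinearMap.mem_ker.mp x.2
    rw [h0, map_zero]
    rfl
  obtain ⟨W', hW', hW'u⟩ := IH N' hN'
  obtain ⟨W'mono, W'bot, W'top, W'map, W'5⟩ := hW'
  set P : Submodule K (Km ⧸ I') → Submodule K H :=
    fun S => Submodule.map Km.subtype (S.comap I'.mkQ) with hPdef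
  have hPmem : ∀ (S : Submodule K (Km ⧸ I')) (x : H),
      x ∈ P S ↔ ∃ hx : x ∈ Km, I'.mkQ ⟨x, hx⟩ ∈ S := by
    intro S x
    constructor
    · rintro ⟨⟨y, hy⟩, hyS, rfl⟩
      exact ⟨hy, hyS⟩
    · rintro ⟨hx, hS⟩
      exact ⟨⟨x, hx⟩, hS, rfl⟩
  have hPmono : ∀ {S T : Submodule K (Km ⧸ I')}, S ≤ T → P S ≤ P T := fun h =>
    Submodule.map_mono (Submodule.comap_mono h)
  have hPbot : P ⊥ = Im := by
    ext x
    rw [hPmem]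
    constructor
    · rintro ⟨hx, hS⟩
      rw [Submodule.mem_bot] at hS
      exact (Submodule.Quotient.mk_eq_zero I').mp hS
    · intro hx
      exact ⟨hIK hx, (Submodule.Quotient.mk_eq_zero I').mpr hx⟩
  have hPtop : P ⊤ = Km := by
    rw [hPdef]
    dsimp only
    rw [Submodule.comap_top, Submodule.map_subtype_top]
  set W : ℤ → Submodule K H :=
    fun l => if l < 0 then ⊥ else if 2 * ((m : ℤ) + 1) ≤ l then ⊤ else P (W' (l - 1))
    with hWdef
  have hWlow : ∀ l : ℤ, l < 0 → W l = ⊥ := by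
    intro l hl; rw [hWdef]; simp only; rw [if_pos hl]
  have hWhigh : ∀ l : ℤ, 2 * ((m : ℤ) + 1) ≤ l → W l = ⊤ := by
    intro l hl; rw [hWdef]; simp only; rw [if_neg (by omega), if_pos hl]
  have hWmid : ∀ l : ℤ, 0 ≤ l → l < 2 * ((m : ℤ) + 1) → W l = P (W' (l - 1)) := by
    intro l h0 h1; rw [hWdef]; simp only; rw [if_neg (by omega), if_neg (by omega)]
  have hWmem : ∀ l : ℤ, 0 ≤ l → l < 2 * ((m : ℤ) + 1) → ∀ x : H,
      (x ∈ W l ↔ ∃ hx : x ∈ Km, I'.mkQ ⟨x, hx⟩ ∈ W' (l - 1)) := by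
    intro l h0 h1 x
    rw [hWmid l h0 h1]; exact hPmem _ x
  have hW0 : W 0 = Im := by
    rw [hWmid 0 le_rfl (by omega)]
    have e : (0:ℤ) - 1 = -1 := by norm_num
    rw [e, W'bot (-1) (by norm_num), hPbot]
  have hWtopmid : W (2 * (m:ℤ) + 1) = Km := by
    rw [hWmid _ (by omega) (by omega)]
    have e : (2 * (m:ℤ) + 1 - 1) = 2 * m := by ring
    rw [e, W'top _ le_rfl, hPtop]
  have hW'0N : ∀ (x : H) (hx : x ∈ Km), I'.mkQ ⟨x, hx⟩ ∈ W' 0 → N x = 0 := by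
    intro x hx hmem
    obtain ⟨_, _, Wc⟩ := W'5 m
    have e0 : (m : ℤ) - m = 0 := by ring
    rw [e0] at Wc
    obtain ⟨x', hx', hsub⟩ := Wc _ hmem
    rw [show (0:ℤ) - 1 = -1 by norm_num, W'bot (-1) (by norm_num)] at hsub
    obtain ⟨u, rfl⟩ := I'.mkQ_surjective x'
    rw [hck] at hsub
    rw [Submodule.mem_bot, sub_eq_zero] at hsub
    have hdiff : (⟨x, hx⟩ - (Nr ^ m) u : Km) ∈ I' := (Submodule.Quotient.eq I').mp hsub
    have hcoe : x - (N ^ m) (u : H) ∈ Im := by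
      rw [hmemI'] at hdiff
      simpa [hNrk] using hdiff
    obtain ⟨w, hw⟩ := hcoe
    have hx2 : x = (N ^ (m+1)) w + (N ^ m) (u : H) := eq_add_of_sub_eq hw.symm
    rw [hx2, map_add]
    have t1 : N ((N ^ (m+1)) w) = 0 := by
      rw [← Module.End.mul_apply, ← pow_succ', hpow (m+2) le_rfl]; rfl
    have t2 : N ((N ^ m) (u : H)) = 0 := by
      rw [← Module.End.mul_apply, ← pow_succ']
      exact LinearMap.mem_ker.mp u.2
    rw [t1, t2, add_zero]
  have hc : ((m + 1 : ℕ) : ℤ) = (m : ℤ) + 1 := by push_cast; ring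
  have hMain : IsMonodromyWeightFiltration (m + 1) N W := by
    refine ⟨?_, ?_, ?_, ?_, ?_⟩
    · intro a b hab
      by_cases ha : a < 0
      · rw [hWlow a ha]; exact bot_le
      by_cases hb : 2 * ((m:ℤ) + 1) ≤ b
      · rw [hWhigh b hb]; exact le_top
      rw [hWmid a (by omega) (by omega), hWmid b (by omega) (by omega)]
      exact hPmono (W'mono (by omega))
    · intro l hl; exact hWlow l hl
    · intro l hl
      refine hWhigh l ?_
      push_cast at hl; omega
    · intro l
      intro y hy
      rw [Submodule.mem_map] at hy
      obtain ⟨x, hx, rfl⟩ := hy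
      by_cases h0 : l < 0
      · rw [hWlow l h0, Submodule.mem_bot] at hx
        rw [hx, map_zero]; exact zero_mem _
      by_cases h1 : l = 0
      · subst h1
        rw [hW0] at hx
        obtain ⟨y, rfl⟩ := hx
        have t1 : N ((N ^ (m+1)) y) = 0 := by
          rw [← Module.End.mul_apply, ← pow_succ', hpow (m+2) le_rfl]; rfl
        rw [t1]; exact zero_mem _
      by_cases h2 : l = 1
      · subst h2
        rw [hWmem 1 (by omega) (by omega)] at hx
        obtain ⟨hxK, hmk⟩ := hx
        have e : (1:ℤ) - 1 = 0 := by ring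
        rw [e] at hmk
        rw [hW'0N x hxK hmk]
        exact zero_mem _
      by_cases h3 : l ≤ 2 * (m:ℤ) + 1
      · rw [hWmem l (by omega) (by omega)] at hx
        obtain ⟨hxK, hmk⟩ := hx
        rw [hWmem (l-2) (by omega) (by omega)]
        refine ⟨hNKm x hxK, ?_⟩
        have hstep : N' (I'.mkQ ⟨x, hxK⟩) ∈ W' (l - 1 - 2) :=
          W'map (l-1) (Submodule.mem_map_of_mem hmk)
        rw [hc1] at hstep
        have heq : (Nr ⟨x, hxK⟩ : Km) = ⟨N x, hNKm x hxK⟩ := rfl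
        rw [heq] at hstep
        have e : l - 1 - 2 = l - 2 - 1 := by ring
        rwa [e] at hstep
      by_cases h4 : l = 2 * (m:ℤ) + 2
      · subst h4
        have hNxK : N x ∈ Km := by
          rw [hKmdef, LinearMap.mem_ker, ← Module.End.mul_apply, ← pow_succ,
            hpow (m+1+1) le_rfl]
          rfl
        rw [hWmem (2*(m:ℤ)+2-2) (by omega) (by omega)]
        refine ⟨hNxK, ?_⟩
        obtain ⟨_, Wb, _⟩ := W'5 m
        have hmem1 : I'.mkQ ⟨N x, hNxK⟩ ∈ W' ((m:ℤ) + m) := by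
          rw [W'top _ (by omega)]; trivial
        have hmem2 : (N' ^ m) (I'.mkQ ⟨N x, hNxK⟩) ∈ W' ((m:ℤ) - m - 1) := by
          rw [hck]
          have hin : ((Nr ^ m) ⟨N x, hNxK⟩ : Km) ∈ I' := by
            rw [hmemI', hNrk]
            refine ⟨x, ?_⟩
            rw [pow_succ]
            rfl
          have hz : I'.mkQ ((Nr ^ m) ⟨N x, hNxK⟩) = 0 :=
            (Submodule.Quotient.mk_eq_zero I').mpr hin
          rw [hz]; exact zero_mem _
        have hres := Wb _ hmem1 hmem2
        have e : (m:ℤ) + m - 1 = 2*(m:ℤ)+2-2-1 := by ring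
        rwa [e] at hres
      by_cases h5 : l = 2 * (m:ℤ) + 3
      · subst h5
        have e : 2*(m:ℤ)+3-2 = 2*(m:ℤ)+1 := by ring
        rw [e, hWtopmid, hKmdef, LinearMap.mem_ker, ← Module.End.mul_apply, ← pow_succ,
          hpow (m+1+1) le_rfl]
        rfl
      · rw [hWhigh (l-2) (by omega)]; trivial
    · intro l
      obtain ⟨Wa, Wb, Wc⟩ := W'5 l
      refine ⟨?_, ?_, ?_⟩
      · intro x hx
        rw [hc] at hx ⊢
        by_cases hl0 : l = 0
        · subst hl0; simpa using hx
        by_cases hlm : l ≤ m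
        · rw [hWmem _ (by omega) (by omega)] at hx
          obtain ⟨hxK, hmk⟩ := hx
          have e1 : (m:ℤ) + 1 + l - 1 = (m:ℤ) + l := by ring
          rw [e1] at hmk
          have hres := Wa _ hmk
          rw [hck] at hres
          rw [hWmem _ (by omega) (by omega)]
          refine ⟨hNpowker l x hxK, ?_⟩
          have e2 : (m:ℤ) + 1 - l - 1 = (m:ℤ) - l := by ring
          rw [e2]
          have heq : ((Nr ^ l) ⟨x, hxK⟩ : Km) = ⟨(N ^ l) x, hNpowker l x hxK⟩ :=
            Subtype.ext (hNrk l ⟨x, hxK⟩)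
          rwa [heq] at hres
        by_cases hlm1 : l = m + 1
        · subst hlm1
          have e : (m:ℤ) + 1 - ((m+1:ℕ):ℤ) = 0 := by push_cast; ring
          rw [e, hW0]
          exact ⟨x, rfl⟩
        · rw [hpow l (by omega)]
          simp only [LinearMap.zero_apply]
          exact zero_mem _
      · intro x hx hx2
        rw [hc] at hx hx2 ⊢
        by_cases hl0 : l = 0
        · subst hl0; simpa using hx2
        by_cases hlm : l ≤ m
        · rw [hWmem _ (by omega) (by omega)] at hx
          obtain ⟨hxK, hmk⟩ := hx
          rw [hWmem _ (by omega) (by omega)] at hx2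
          obtain ⟨hxK2, hmk2⟩ := hx2
          have e1 : (m:ℤ) + 1 + l - 1 = (m:ℤ) + l := by ring
          rw [e1] at hmk
          have e2 : (m:ℤ) + 1 - l - 1 - 1 = (m:ℤ) - l - 1 := by ring
          rw [e2] at hmk2
          have heq : I'.mkQ ⟨(N ^ l) x, hxK2⟩ = (N' ^ l) (I'.mkQ ⟨x, hxK⟩) := by
            rw [hck]
            congr 1
            exact Subtype.ext (hNrk l ⟨x, hxK⟩).symm
          rw [heq] at hmk2
          have hres := Wb _ hmk hmk2
          rw [hWmem _ (by omega) (by omega)]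
          refine ⟨hxK, ?_⟩
          have e3 : (m:ℤ) + 1 + l - 1 - 1 = (m:ℤ) + l - 1 := by ring
          rwa [e3]
        by_cases hlm1 : l = m + 1
        · subst hlm1
          have e : (m:ℤ) + 1 - ((m+1:ℕ):ℤ) - 1 = -1 := by push_cast; ring
          rw [e, hWlow (-1) (by norm_num), Submodule.mem_bot] at hx2
          have hxK : x ∈ Km := LinearMap.mem_ker.mpr hx2
          have e2 : (m:ℤ) + 1 + ((m+1:ℕ):ℤ) - 1 = 2*(m:ℤ)+1 := by push_cast; ring
          rw [e2, hWtopmid]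
          exact hxK
        · rw [hWhigh _ (by omega)]
          trivial
      · intro y hy
        rw [hc] at hy ⊢
        by_cases hl0 : l = 0
        · subst hl0
          refine ⟨y, by simpa using hy, ?_⟩
          simp only [pow_zero, Module.End.one_apply, sub_self]
          exact zero_mem _
        by_cases hlm : l ≤ m
        · rw [hWmem _ (by omega) (by omega)] at hy
          obtain ⟨hyK, hmk⟩ := hy
          have e1 : (m:ℤ) + 1 - l - 1 = (m:ℤ) - l := by ring
          rw [e1] at hmk
          obtain ⟨x', hx', hsub⟩ := Wc _ hmk
          obtain ⟨u, rfl⟩ := I'.mkQ_surjective x'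
          refine ⟨(u : H), ?_, ?_⟩
          · rw [hWmem _ (by omega) (by omega)]
            refine ⟨u.2, ?_⟩
            have e2 : (m:ℤ) + 1 + l - 1 = (m:ℤ) + l := by ring
            rw [e2]
            have heq : (⟨(u : H), u.2⟩ : Km) = u := rfl
            rwa [heq]
          · rw [hWmem _ (by omega) (by omega)]
            have hyx : y - (N ^ l) (u : H) ∈ Km := sub_mem hyK (hNpowker l _ u.2)
            refine ⟨hyx, ?_⟩
            have e3 : (m:ℤ) + 1 - l - 1 - 1 = (m:ℤ) - l - 1 := by ring
            rw [e3]
            have heq : I'.mkQ ⟨y - (N ^ l) (u : H), hyx⟩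
                = I'.mkQ ⟨y, hyK⟩ - (N' ^ l) (I'.mkQ u) := by
              rw [hck, ← map_sub]
              congr 1
              apply Subtype.ext
              simp [hNrk]
            rw [heq]
            exact hsub
        by_cases hlm1 : l = m + 1
        · subst hlm1
          have e : (m:ℤ) + 1 - ((m+1:ℕ):ℤ) = 0 := by push_cast; ring
          rw [e, hW0] at hy
          obtain ⟨w, rfl⟩ := hy
          refine ⟨w, ?_, ?_⟩
          · rw [hWhigh _ (by omega)]; trivial
          · rw [sub_self]
            exact zero_mem _
        · have hy0 : y = 0 := by
            rw [hWlow _ (by omega), Submodule.mem_bot] at hy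
            exact hy
          subst hy0
          refine ⟨0, ?_, ?_⟩
          · rw [hWhigh _ (by omega)]; trivial
          · rw [map_zero, sub_zero]
            exact zero_mem _
  refine ⟨W, hMain, ?_⟩
  intro V hV
  have hVend := MWF.ends hV
  obtain ⟨Vmono, Vbot, Vtop, Vmap, V5⟩ := hV
  have e21 : 2 * ((m+1:ℕ):ℤ) - 1 = 2*(m:ℤ)+1 := by push_cast; ring
  rw [e21] at hVend
  have hVKm : V (2*(m:ℤ)+1) = Km := hVend.1
  have hV0 : V 0 = Im := hVend.2
  have hVleKm : ∀ l : ℤ, l ≤ 2*(m:ℤ)+1 → V l ≤ Km :=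
    fun l hl => le_trans (Vmono hl) (le_of_eq hVKm)
  have hImleV : ∀ l : ℤ, 0 ≤ l → Im ≤ V l :=
    fun l hl => le_trans (le_of_eq hV0.symm) (Vmono hl)
  have hN'pow : ∀ k : ℕ, m + 1 ≤ k → N' ^ k = 0 := by
    intro k hk
    rw [← Nat.sub_add_cancel hk, pow_add, hN', mul_zero]
  set V' : ℤ → Submodule K (Km ⧸ I') :=
    fun j => Submodule.map I'.mkQ ((V (j+1)).comap Km.subtype) with hV'def
  have hV'mem : ∀ (j : ℤ) (y' : Km ⧸ I'),
      y' ∈ V' j ↔ ∃ x : Km, (x:H) ∈ V (j+1) ∧ I'.mkQ x = y' := by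
    intro j y'
    rw [hV'def]
    dsimp only
    rw [Submodule.mem_map]
    constructor
    · rintro ⟨x, hx, rfl⟩
      exact ⟨x, hx, rfl⟩
    · rintro ⟨x, hx, rfl⟩
      exact ⟨x, hx, rfl⟩
  have hV'bot : ∀ j : ℤ, j < 0 → V' j = ⊥ := by
    intro j hj
    rw [eq_bot_iff]
    intro y' hy'
    rw [hV'mem] at hy'
    obtain ⟨x, hx, rfl⟩ := hy'
    have h1 : (x:H) ∈ V 0 := Vmono (by omega : j+1 ≤ 0) hx
    rw [hV0] at h1
    rw [Submodule.mem_bot]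
    exact (Submodule.Quotient.mk_eq_zero I').mpr h1
  have hV'top : ∀ j : ℤ, 2*(m:ℤ) ≤ j → V' j = ⊤ := by
    intro j hj
    rw [eq_top_iff]
    intro y' _
    obtain ⟨u, rfl⟩ := I'.mkQ_surjective y'
    rw [hV'mem]
    refine ⟨u, ?_, rfl⟩
    have hu : (u:H) ∈ V (2*(m:ℤ)+1) := by rw [hVKm]; exact u.2
    exact Vmono (by omega) hu
  have hV'5 : IsMonodromyWeightFiltration m N' V' := by
    refine ⟨?_, hV'bot, hV'top, ?_, ?_⟩
    · intro a b hab
      exact Submodule.map_mono (Submodule.comap_mono (Vmono (by omega)))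
    · intro j z hz
      rw [Submodule.mem_map] at hz
      obtain ⟨y', hy', rfl⟩ := hz
      rw [hV'mem] at hy'
      obtain ⟨x, hx, rfl⟩ := hy'
      rw [hc1, hV'mem]
      refine ⟨Nr x, ?_, rfl⟩
      have h1 := Vmap (j+1) (Submodule.mem_map_of_mem hx)
      have e : j + 1 - 2 = j - 2 + 1 := by ring
      rw [e] at h1
      rw [hNrcoe x]
      exact h1
    · intro l
      refine ⟨?_, ?_, ?_⟩
      · intro y' hy'
        by_cases hlm : l ≤ m
        · rw [hV'mem] at hy'
          obtain ⟨x, hx, rfl⟩ := hy'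
          rw [hck, hV'mem]
          refine ⟨(Nr ^ l) x, ?_, rfl⟩
          have e1 : (m:ℤ) + l + 1 = ((m+1:ℕ):ℤ) + l := by push_cast; ring
          rw [e1] at hx
          have hres := (V5 l).1 _ hx
          have e2 : ((m+1:ℕ):ℤ) - l = (m:ℤ) - l + 1 := by push_cast; ring
          rw [e2] at hres
          simpa [hNrk] using hres
        · have hz : (N' ^ l) y' = 0 := by
            rw [hN'pow l (by omega)]; rfl
          rw [hz]
          exact zero_mem _
      · intro y' hy' hy2
        by_cases hlm : l ≤ m
        · rw [hV'mem] at hy'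
          obtain ⟨x, hx, rfl⟩ := hy'
          rw [hck, hV'mem] at hy2
          obtain ⟨z, hz, hzeq⟩ := hy2
          have hdiff : ((Nr ^ l) x - z : Km) ∈ I' :=
            (Submodule.Quotient.eq I').mp hzeq.symm
          have hNlx : (N ^ l) (x:H) ∈ V ((m:ℤ) - l - 1 + 1) := by
            have h1 : (N ^ l) (x:H) - (z:H) ∈ Im := by
              have h2 := (hmemI' _).mp hdiff
              simpa [hNrk] using h2
            have h2 : (N ^ l) (x:H) - (z:H) + (z:H) ∈ V ((m:ℤ) - l - 1 + 1) :=
              add_mem (hImleV _ (by omega) h1) hz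
            simpa using h2
          have e1 : (m:ℤ) + l + 1 = ((m+1:ℕ):ℤ) + l := by push_cast; ring
          rw [e1] at hx
          have e2 : (m:ℤ) - l - 1 + 1 = ((m+1:ℕ):ℤ) - l - 1 := by push_cast; ring
          rw [e2] at hNlx
          have hres := (V5 l).2.1 _ hx hNlx
          rw [hV'mem]
          refine ⟨x, ?_, rfl⟩
          have e3 : ((m+1:ℕ):ℤ) + l - 1 = (m:ℤ) + l - 1 + 1 := by push_cast; ring
          rw [e3] at hres
          exact hres
        · rw [hV'top _ (by omega)]
          trivial
      · intro y' hy'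
        by_cases hlm : l ≤ m
        · rw [hV'mem] at hy'
          obtain ⟨y, hy, rfl⟩ := hy'
          have e1 : (m:ℤ) - l + 1 = ((m+1:ℕ):ℤ) - l := by push_cast; ring
          rw [e1] at hy
          obtain ⟨x, hx, hsub⟩ := (V5 l).2.2 _ hy
          have hxK : x ∈ Km := hVleKm _ (by push_cast; omega) hx
          refine ⟨I'.mkQ ⟨x, hxK⟩, ?_, ?_⟩
          · rw [hV'mem]
            refine ⟨⟨x, hxK⟩, ?_, rfl⟩
            have e2 : (m:ℤ) + l + 1 = ((m+1:ℕ):ℤ) + l := by push_cast; ring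
            rw [e2]
            exact hx
          · rw [hck, ← map_sub, hV'mem]
            have e3 : ((m+1:ℕ):ℤ) - l - 1 = (m:ℤ) - l - 1 + 1 := by push_cast; ring
            rw [e3] at hsub
            refine ⟨y - (Nr ^ l) ⟨x, hxK⟩, ?_, rfl⟩
            simpa [hNrk] using hsub
        · have hy0 : y' = 0 := by
            rw [hV'bot _ (by omega), Submodule.mem_bot] at hy'
            exact hy'
          subst hy0
          refine ⟨0, zero_mem _, ?_⟩
          rw [map_zero, sub_zero]
          exact zero_mem _
  have hV'W' := hW'u V' hV'5
  funext l
  by_cases h0 : l < 0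
  · rw [Vbot l h0, hWlow l h0]
  by_cases h1 : 2*((m:ℤ)+1) ≤ l
  · rw [Vtop l (by push_cast; omega), hWhigh l h1]
  have hsup : I' ≤ (V l).comap Km.subtype := by
    intro z hz
    exact hImleV l (by omega) ((hmemI' z).mp hz)
  rw [hWmid l (by omega) (by omega), ← hV'W']
  rw [hV'def, hPdef]
  dsimp only
  have e : l - 1 + 1 = l := by ring
  rw [e, Submodule.comap_map_eq, Submodule.ker_mkQ, sup_eq_left.mpr hsup,
    Submodule.map_comap_subtype]
  exact (inf_eq_right.mpr (hVleKm l (by omega))).symm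

private theorem MWF.base {K : Type v} [Field K] {H : Type u} [AddCommGroup H] [Module K H]
    (N : H →ₗ[K] H) (hN : N ^ (0 + 1) = 0) :
    ∃! W : ℤ → Submodule K H, IsMonodromyWeightFiltration 0 N W := by
  have hN0 : N = 0 := by simpa using hN
  refine ⟨fun l => if l < 0 then ⊥ else ⊤, ⟨?_, ?_, ?_, ?_, ?_⟩, ?_⟩
  · intro a b hab
    dsimp only
    split_ifs with h1 h2 h3
    · exact le_rfl
    · exact bot_le
    · exact absurd (lt_of_le_of_lt hab h3) h1
    · exact le_rfl
  · intro l hl; simp [hl]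
  · intro l hl
    have : ¬ l < 0 := by omega
    simp [this]
  · intro l
    rintro _ ⟨y, -, rfl⟩
    simp only [hN0, LinearMap.zero_apply]
    split_ifs <;> simp
  · intro l
    refine ⟨?_, ?_, ?_⟩
    · intro x hx
      rcases Nat.eq_zero_or_pos l with rfl | hl
      · simpa using hx
      · rw [hN0, zero_pow (by omega)]
        simp only [LinearMap.zero_apply]
        split_ifs <;> simp
    · intro x hx h
      rcases Nat.eq_zero_or_pos l with rfl | hl
      · simpa using h
      · have : ¬ ((0:ℕ) : ℤ) + l - 1 < 0 := by push_cast; omega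
        simp [this, hl.ne']
    · intro y hy
      rcases Nat.eq_zero_or_pos l with rfl | hl
      · refine ⟨y, hy, ?_⟩
        simp only [pow_zero, Module.End.one_apply, sub_self]
        split_ifs <;> simp
      · have hy0 : y = 0 := by
          have : ((0:ℕ) : ℤ) - l < 0 := by push_cast; omega
          simp only [this, if_pos] at hy
          simpa using hy
        refine ⟨0, ?_, ?_⟩
        · have : ¬ ((0:ℕ) : ℤ) + l < 0 := by push_cast; omega
          simp [this]
        · rw [hy0]
          simp only [map_zero, sub_zero]
          split_ifs <;> simp
  · intro V hV
    obtain ⟨_, hbot, htop, _, _⟩ := hV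
    funext l
    by_cases h : l < 0
    · rw [hbot l h]; simp [h]
    · rw [htop l (by push_cast; omega)]; simp [h]

private theorem MWF.aux (K : Type v) [Field K] :
    ∀ (m : ℕ) {H : Type u} [AddCommGroup H] [Module K H] (N : H →ₗ[K] H),
      N ^ (m + 1) = 0 → ∃! W : ℤ → Submodule K H, IsMonodromyWeightFiltration m N W := by
  intro m
  induction m with
  | zero =>
    intro H _ _ N hN
    exact MWF.base N hN
  | succ m IHm =>
    intro H _ _ N hN
    exact MWF.succ m N hN (fun {H'} _ _ N' h => IHm N' h)

/-- Existence and uniqueness of the monodromy weight filtration of a nilpotent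
endomorphism `N` with `N^{m+1} = 0` on a finite-dimensional vector space over a
field of characteristic zero. -/
theorem stmt_0 {K H : Type*} [Field K] [CharZero K] [AddCommGroup H] [Module K H]
    [FiniteDimensional K H] (m : ℕ) (N : H →ₗ[K] H) (hN : N ^ (m + 1) = 0) :
    ∃! W : ℤ → Submodule K H, IsMonodromyWeightFiltration m N W :=
  MWF.aux K m N hN
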